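/- Let P, Q ∈ ℤ and R ∈ ℚ, and suppose the Lucas semigroup S = L(P,Q,R) has finite complement in ℕ (i.e., S is a numerical semigroup). Then either s(S) = ∅ or gcd s(S) ≥ 2, i.e., either S has no nonzero small elements or there is an integer d ≥ 2 dividing every nonzero small element of S. Consequently, any numerical semigroup S with s(S) ≠ ∅ and gcd s(S) = 1 is not the exponent semigroup of any 2×2 rational matrix. -/

import Mathlib

/-- The Lucas sequence `U_n(P,Q)`: `U_0 = 0`, `U_1 = 1`,
`U_{n+2} = P·U_{n+1} − Q·U_n`. -/
def lucasU (P Q : ℤ) : ℕ → ℤ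
  | 0 => 0
  | 1 => 1
  | n + 2 => P * lucasU P Q (n + 1) - Q * lucasU P Q n

/-- The Lucas semigroup `L(P,Q,R) = {n ∈ ℕ : U_n(P,Q)·R ∈ ℤ}`. -/
def lucasSG (P Q : ℤ) (R : ℚ) : Set ℕ :=
  {n : ℕ | ∃ k : ℤ, (lucasU P Q n : ℚ) * R = (k : ℚ)}

/-- The Frobenius number of `S ⊆ ℕ`: the largest natural number not in `S`
(for a numerical semigroup, `Sᶜ` is finite and nonempty so `sSup` is it). -/
noncomputable def frobNum (S : Set ℕ) : ℕ := sSup Sᶜ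

/-- The set of nonzero small elements `s(S) = {n ∈ S : 0 < n < g(S)}`. -/
def smallElems (S : Set ℕ) : Set ℕ := {n : ℕ | n ∈ S ∧ 0 < n ∧ n < frobNum S}

/-- The exponent semigroup `S(A) = {n ∈ ℕ : A^n has all integer entries}`. -/
def expSG {d : ℕ} (A : Matrix (Fin d) (Fin d) ℚ) : Set ℕ :=
  {n : ℕ | ∀ i j, ∃ k : ℤ, (A ^ n) i j = (k : ℚ)}

def auxM (c dq : ℤ) : ℕ → ℤ
  | 0 => 2
  | 1 => c
  | n + 2 => c * auxM c dq (n + 1) - dq * auxM c dq n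

namespace LucasAux

theorem natCast_dvd' (n : ℕ) (z : ℤ) : ((n:ℤ) ∣ z) ↔ n ∣ z.natAbs := by
  rw [← Int.natAbs_dvd_natAbs, Int.natAbs_natCast]

theorem rec2 (P Q : ℤ) (n : ℕ) :
    lucasU P Q (n+2) = P * lucasU P Q (n+1) - Q * lucasU P Q n := rfl

theorem docagne (P Q : ℤ) (m n : ℕ) :
    lucasU P Q (m+n) * lucasU P Q (n+1) - lucasU P Q (m+n+1) * lucasU P Q n
      = Q ^ n * lucasU P Q m := by
  induction n with
  | zero => simp [lucasU]
  | succ n ih =>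
    show lucasU P Q (m+n+1) * lucasU P Q (n+2) - lucasU P Q (m+n+2) * lucasU P Q (n+1) = _
    rw [rec2, rec2]
    have : lucasU P Q (m+n+1) * (P * lucasU P Q (n+1) - Q * lucasU P Q n) -
        (P * lucasU P Q (m+n+1) - Q * lucasU P Q (m+n)) * lucasU P Q (n+1)
        = Q * (lucasU P Q (m+n) * lucasU P Q (n+1) - lucasU P Q (m+n+1) * lucasU P Q n) := by
      ring
    rw [this, ih]; ring

theorem renorm (P Q : ℤ) (p : ℤ) (a : ℕ) (P' Q' : ℤ)
    (hP : P = p^a * P') (hQ : Q = p^(2*a) * Q') :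
    ∀ n, lucasU P Q (n+1) = p^(n*a) * lucasU P' Q' (n+1) := by
  intro n
  induction n using Nat.strong_induction_on with
  | _ n ih =>
    match n with
    | 0 => simp [lucasU]
    | 1 =>
      show lucasU P Q 2 = _
      have : lucasU P Q 2 = P := by simp [lucasU]
      have h2 : lucasU P' Q' 2 = P' := by simp [lucasU]
      rw [this, h2, hP]; ring
    | (k+2) =>
      have i1 := ih (k+1) (by omega)
      have i0 := ih k (by omega)
      show lucasU P Q ((k+1)+2) = p^((k+2)*a) * lucasU P' Q' ((k+1)+2)
      rw [rec2 P Q (k+1), i1, i0, hP, hQ, rec2 P' Q' (k+1)]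
      ring

theorem sub_closed {p : ℕ} (hp : p.Prime) {Q' : ℤ} (hq : ¬ (p:ℤ) ∣ Q') (P' : ℤ) (c : ℕ)
    {m n : ℕ} (h1 : (p:ℤ)^c ∣ lucasU P' Q' (m+n)) (h2 : (p:ℤ)^c ∣ lucasU P' Q' n) :
    (p:ℤ)^c ∣ lucasU P' Q' m := by
  have hpp : Prime (p:ℤ) := Nat.prime_iff_prime_int.mp hp
  have hcop : IsCoprime ((p:ℤ)^c) (Q'^n) :=
    (IsCoprime.pow ((hpp.coprime_iff_not_dvd).mpr hq))
  have hd : (p:ℤ)^c ∣ Q'^n * lucasU P' Q' m := by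
    rw [← docagne P' Q' m n]
    exact dvd_sub (h1.mul_right _) (h2.mul_left _)
  exact hcop.dvd_of_dvd_mul_left hd

theorem min_dvd {p : ℕ} (hp : p.Prime) {Q' : ℤ} (hq : ¬ (p:ℤ) ∣ Q') (P' : ℤ) (c : ℕ)
    (hex : ∃ n, 0 < n ∧ (p:ℤ)^c ∣ lucasU P' Q' n) :
    ∀ k, (p:ℤ)^c ∣ lucasU P' Q' k → Nat.find hex ∣ k := by
  set r := Nat.find hex with hr
  obtain ⟨hr0, hrd⟩ := Nat.find_spec hex
  intro k
  induction k using Nat.strong_induction_on with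
  | _ k ih =>
    intro hk
    rcases Nat.eq_zero_or_pos k with h0 | hkpos
    · simp [h0]
    rcases lt_or_ge k r with hlt | hle
    · exact absurd (Nat.find_min' hex ⟨hkpos, hk⟩) (by omega)
    · have hsub : (p:ℤ)^c ∣ lucasU P' Q' (k - r) := by
        have : k - r + r = k := by omega
        exact sub_closed hp hq P' c (n := r) (m := k - r) (by rw [this]; exact hk) hrd
      have hdk := ih (k - r) (by omega) hsub
      have h2 : r ∣ (k - r) + r := Nat.dvd_add hdk dvd_rfl
      rwa [Nat.sub_add_cancel hle] at h2

theorem caseB {p : ℕ} (hp : p.Prime) {P' Q' : ℤ} (hP : ¬ (p:ℤ) ∣ P') (hQ : (p:ℤ) ∣ Q') :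
    ∀ n, ¬ (p:ℤ) ∣ lucasU P' Q' (n+1) := by
  have hpp : Prime (p:ℤ) := Nat.prime_iff_prime_int.mp hp
  intro n
  induction n using Nat.strong_induction_on with
  | _ n ih =>
    match n with
    | 0 => simpa [lucasU] using hpp.not_dvd_one
    | 1 =>
      show ¬ (p:ℤ) ∣ lucasU P' Q' 2
      have : lucasU P' Q' 2 = P' * 1 - Q' * 0 := rfl
      rw [this]; simpa using hP
    | (k+2) =>
      intro hdvd
      rw [rec2 P' Q' (k+1)] at hdvd
      have h1 : (p:ℤ) ∣ Q' * lucasU P' Q' (k+1) := hQ.mul_right _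
      have h2 : (p:ℤ) ∣ P' * lucasU P' Q' (k+1+1) := by
        have := dvd_add hdvd h1
        simpa using this
      rcases hpp.dvd_mul.mp h2 with h | h
      · exact hP h
      · exact ih (k+1) (by omega) h

theorem caseC {p : ℕ} (hp : p.Prime) {P' Q' : ℤ} (hP : (p:ℤ) ∣ P') (hQ : (p:ℤ) ∣ Q')
    (hQ2 : ¬ (p:ℤ)^2 ∣ Q') :
    ∀ m, ((p:ℤ)^m ∣ lucasU P' Q' (2*m+1)) ∧ ¬ ((p:ℤ)^(m+1) ∣ lucasU P' Q' (2*m+1)) ∧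
      ((p:ℤ)^(m+1) ∣ lucasU P' Q' (2*m+2)) := by
  have hpp : Prime (p:ℤ) := Nat.prime_iff_prime_int.mp hp
  have hp0 : (p:ℤ) ≠ 0 := by exact_mod_cast hp.ne_zero
  obtain ⟨u, hu⟩ := hQ
  have hQ' : (p:ℤ) ∣ Q' := ⟨u, hu⟩
  have hpu : ¬ (p:ℤ) ∣ u := by
    intro h
    obtain ⟨u', h'⟩ := h
    exact hQ2 ⟨u', by rw [hu, h']; ring⟩
  intro m
  induction m with
  | zero =>
    refine ⟨by simp [lucasU], by simpa [lucasU] using hpp.not_dvd_one, ?_⟩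
    have : lucasU P' Q' 2 = P' * 1 - Q' * 0 := rfl
    rw [this]; simpa using hP
  | succ m ih =>
    obtain ⟨hA, hAx, hB⟩ := ih
    have e1 : 2*(m+1)+1 = (2*m+1)+2 := by ring
    have e2 : 2*m+1+1 = 2*m+2 := by ring
    have hrec : lucasU P' Q' (2*(m+1)+1)
        = P' * lucasU P' Q' (2*m+2) - Q' * lucasU P' Q' (2*m+1) := by
      rw [e1, rec2, e2]
    have e3 : 2*(m+1)+2 = (2*m+2)+2 := by ring
    have e4 : 2*m+2+1 = 2*(m+1)+1 := by ring
    have hrec2 : lucasU P' Q' (2*(m+1)+2)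
        = P' * lucasU P' Q' (2*(m+1)+1) - Q' * lucasU P' Q' (2*m+2) := by
      rw [e3, rec2, e4]
    have hd1 : (p:ℤ)^(m+1) ∣ P' * lucasU P' Q' (2*m+2) := hB.mul_left P'
    have hd2 : (p:ℤ)^(m+1) ∣ Q' * lucasU P' Q' (2*m+1) := by
      rw [pow_succ']; exact mul_dvd_mul hQ' hA
    have hAnew : (p:ℤ)^(m+1) ∣ lucasU P' Q' (2*(m+1)+1) := by
      rw [hrec]; exact dvd_sub hd1 hd2
    refine ⟨hAnew, ?_, ?_⟩
    · intro hdvd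
      rw [hrec] at hdvd
      have hd1' : (p:ℤ)^(m+2) ∣ P' * lucasU P' Q' (2*m+2) := by
        rw [pow_succ']; exact mul_dvd_mul hP hB
      have hQW : (p:ℤ)^(m+2) ∣ Q' * lucasU P' Q' (2*m+1) := by
        have h12 : (m+1+1) = m + 2 := by ring
        rw [h12] at hdvd
        have := dvd_sub hd1' hdvd
        simpa using this
      have hexp : Q' * lucasU P' Q' (2*m+1) = (p:ℤ) * (u * lucasU P' Q' (2*m+1)) := by
        rw [hu]; ring
      rw [hexp] at hQW
      have hcan : (p:ℤ)^(m+1) ∣ u * lucasU P' Q' (2*m+1) := by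
        have : (p:ℤ) * (p:ℤ)^(m+1) ∣ (p:ℤ) * (u * lucasU P' Q' (2*m+1)) := by
          rw [← pow_succ']
          have h12 : (m+1+1) = m + 2 := by ring
          rw [h12]; exact hQW
        exact (mul_dvd_mul_iff_left hp0).mp this
      have : (p:ℤ)^(m+1) ∣ lucasU P' Q' (2*m+1) :=
        ((IsCoprime.pow_left (hpp.coprime_iff_not_dvd.mpr hpu))).dvd_of_dvd_mul_left hcan
      exact hAx this
    · rw [hrec2]
      have g1 : (p:ℤ)^(m+2) ∣ P' * lucasU P' Q' (2*(m+1)+1) := by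
        rw [pow_succ']; exact mul_dvd_mul hP hAnew
      have g2 : (p:ℤ)^(m+2) ∣ Q' * lucasU P' Q' (2*m+2) := by
        rw [pow_succ']; exact mul_dvd_mul hQ' hB
      have h12 : (m+1+1) = m + 2 := by ring
      rw [h12]
      exact dvd_sub g1 g2

end LucasAux
namespace LucasAux

theorem perPrime (P Q : ℤ) {p : ℕ} (hp : p.Prime) (v : ℕ)
    (hfin : ({n : ℕ | (p:ℤ)^v ∣ lucasU P Q n}ᶜ).Finite) :
    ∃ d : ℕ, 2 ≤ d ∧ ∀ n, (p:ℤ)^v ∣ lucasU P Q n → 0 < n →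
      n < sSup ({n : ℕ | (p:ℤ)^v ∣ lucasU P Q n}ᶜ) → d ∣ n := by
  have hp0 : (p:ℤ) ≠ 0 := by exact_mod_cast hp.ne_zero
  set T : Set ℕ := {n : ℕ | (p:ℤ)^v ∣ lucasU P Q n} with hT
  by_cases hC : Tᶜ = ∅
  · exact ⟨2, le_refl 2, fun n _ _ hlt => by rw [hC, csSup_empty] at hlt; simp at hlt⟩
  have hg : sSup Tᶜ ∈ Tᶜ := Set.Nonempty.csSup_mem (Set.nonempty_iff_ne_empty.mpr hC) hfin
  set g := sSup Tᶜ with hgdef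
  have hgT : ¬ (p:ℤ)^v ∣ lucasU P Q g := hg
  have hg0 : g ≠ 0 := by
    intro h
    exact hgT (by rw [h]; exact dvd_zero _)
  obtain ⟨g1, hg1⟩ : ∃ g1, g = g1 + 1 := ⟨g - 1, by omega⟩
  by_cases hPQ : P = 0 ∧ Q = 0
  · have hz : ∀ n, lucasU P Q (n+2) = 0 := by
      intro n
      rw [rec2, hPQ.1, hPQ.2]; ring
    have hgeq : g = 1 := by
      by_contra hne
      have : g ≥ 2 := by omega
      obtain ⟨k, hk⟩ : ∃ k, g = k + 2 := ⟨g - 2, by omega⟩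
      exact hgT (by rw [hk, hz]; exact dvd_zero _)
    exact ⟨2, le_refl 2, fun n _ h0 hlt => by rw [hgeq] at hlt; omega⟩
  have hbound : ∃ a : ℕ, ¬ ((p:ℤ)^(a+1) ∣ P ∧ (p:ℤ)^(2*(a+1)) ∣ Q) := by
    have habs : ∀ z : ℤ, z ≠ 0 → ∀ e : ℕ, z.natAbs < e → ¬ (p:ℤ)^e ∣ z := by
      intro z hz e he hdvd
      rw [← Nat.cast_pow, natCast_dvd'] at hdvd
      have h1 := Nat.le_of_dvd (Int.natAbs_pos.mpr hz) hdvd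
      have h2 : e < p ^ e := (Nat.lt_pow_self hp.one_lt : e < p ^ e)
      have h3 : p ^ e ≤ p ^ e := le_refl _
      have := Nat.pow_le_pow_right hp.one_lt.le (le_refl e)
      omega
    rcases not_and_or.mp hPQ with hP0 | hQ0
    · exact ⟨P.natAbs, fun h => habs P hP0 _ (by omega) h.1⟩
    · exact ⟨Q.natAbs, fun h => habs Q hQ0 _ (by omega) h.2⟩
  obtain ⟨a, hspec, haP, haQ⟩ : ∃ a, ¬((p:ℤ)^(a+1) ∣ P ∧ (p:ℤ)^(2*(a+1)) ∣ Q) ∧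
      (p:ℤ)^a ∣ P ∧ (p:ℤ)^(2*a) ∣ Q := by
    refine ⟨Nat.find hbound, Nat.find_spec hbound, ?_, ?_⟩
    · rcases Nat.eq_zero_or_pos (Nat.find hbound) with h0 | hpos
      · rw [h0]; simpa using one_dvd P
      · obtain ⟨a', he⟩ : ∃ a', Nat.find hbound = a' + 1 := ⟨Nat.find hbound - 1, by omega⟩
        have h2 := not_not.mp (Nat.find_min hbound (m := a') (by omega))
        rw [he]; exact h2.1
    · rcases Nat.eq_zero_or_pos (Nat.find hbound) with h0 | hpos
      · rw [h0]; simpa using one_dvd Q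
      · obtain ⟨a', he⟩ : ∃ a', Nat.find hbound = a' + 1 := ⟨Nat.find hbound - 1, by omega⟩
        have h2 := not_not.mp (Nat.find_min hbound (m := a') (by omega))
        rw [he]; exact h2.2
  set P' := P / (p:ℤ)^a with hP'
  set Q' := Q / (p:ℤ)^(2*a) with hQ'
  have hPeq : P = (p:ℤ)^a * P' := (Int.mul_ediv_cancel' haP).symm
  have hQeq : Q = (p:ℤ)^(2*a) * Q' := (Int.mul_ediv_cancel' haQ).symm
  have hkey : ¬ ((p:ℤ) ∣ P' ∧ (p:ℤ)^2 ∣ Q') := by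
    rintro ⟨h1, h2⟩
    apply hspec
    constructor
    · rw [pow_succ, hPeq]; exact mul_dvd_mul dvd_rfl h1
    · have : 2*(a+1) = 2*a + 2 := by ring
      rw [this, pow_add, hQeq]; exact mul_dvd_mul dvd_rfl h2
  have hre := renorm P Q (p:ℤ) a P' Q' hPeq hQeq
  have ht : ∀ n : ℕ, ((p:ℤ)^v ∣ lucasU P Q (n+1) ↔ (p:ℤ)^(v - n*a) ∣ lucasU P' Q' (n+1)) := by
    intro n
    rw [hre n]
    rcases le_or_gt v (n*a) with h | h
    · have hv0 : v - n*a = 0 := by omega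
      rw [hv0, pow_zero]
      exact iff_of_true (dvd_mul_of_dvd_left (pow_dvd_pow _ h) _) (one_dvd _)
    · constructor
      · intro hd
        have hsplit : (p:ℤ)^v = (p:ℤ)^(n*a) * (p:ℤ)^(v - n*a) := by
          rw [← pow_add]; congr 1; omega
        rw [hsplit] at hd
        exact (mul_dvd_mul_iff_left (pow_ne_zero _ hp0)).mp
          ((mul_dvd_mul_iff_left (pow_ne_zero (n*a) hp0)).mpr
            ((mul_dvd_mul_iff_left (pow_ne_zero (n*a) hp0)).mp hd))
      · intro hd
        have hsplit : (p:ℤ)^v = (p:ℤ)^(n*a) * (p:ℤ)^(v - n*a) := by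
          rw [← pow_add]; congr 1; omega
        rw [hsplit]
        exact mul_dvd_mul dvd_rfl hd
  have hgT' : ¬ (p:ℤ)^(v - g1*a) ∣ lucasU P' Q' (g1+1) := by
    intro h
    exact hgT (by rw [hg1]; exact (ht g1).mpr h)
  by_cases hq' : (p:ℤ) ∣ Q'
  · by_cases hden : (p:ℤ) ∣ P'
    · -- Case C : all small elements are even
      have hq2 : ¬ (p:ℤ)^2 ∣ Q' := fun h => hkey ⟨hden, h⟩
      have hCC := caseC hp hden hq' hq2
      refine ⟨2, le_refl 2, ?_⟩
      intro n hnT hn0 hnlt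
      by_contra hodd
      obtain ⟨m, hm⟩ : ∃ m, n = 2*m + 1 := ⟨n / 2, by omega⟩
      have hnT' : (p:ℤ)^(v - (2*m)*a) ∣ lucasU P' Q' (2*m+1) := by
        have := (ht (2*m)).mp (by rw [← hm]; exact hnT)
        simpa using this
      have hub : v ≤ m + 2*m*a := by
        by_contra hgt
        push_neg at hgt
        have : (p:ℤ)^(m+1) ∣ lucasU P' Q' (2*m+1) :=
          (pow_dvd_pow (p:ℤ) (by omega : m + 1 ≤ v - 2*m*a)).trans hnT'
        exact (hCC m).2.1 this
      rcases Nat.even_or_odd g with hev | hod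
      · -- g even : g = 2*M+2
        obtain ⟨M, hM⟩ : ∃ M, g = 2*M + 2 := by
          obtain ⟨M', hM'⟩ := hev
          exact ⟨M' - 1, by omega⟩
        have hmM : m ≤ M := by omega
        have hgT2 : ¬ (p:ℤ)^(v - (2*M+1)*a) ∣ lucasU P' Q' (2*M+2) := by
          intro h
          apply hgT
          rw [hM]
          have := (ht (2*M+1)).mpr (by simpa using h)
          simpa using this
        have hlb : v ≥ (2*M+1)*a + M + 2 := by
          by_contra hlt2
          push_neg at hlt2
          exact hgT2 ((pow_dvd_pow (p:ℤ) (by omega : v - (2*M+1)*a ≤ M + 1)).trans (hCC M).2.2)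
        have hx : 2*m*a ≤ 2*M*a := Nat.mul_le_mul_right a (by omega)
        have hy : 2*M*a ≤ (2*M+1)*a := Nat.mul_le_mul_right a (by omega)
        have hz1 : m + 2*m*a ≤ M + 2*M*a := by omega
        omega
      · -- g odd : g = 2*M+1
        obtain ⟨M, hM⟩ := hod
        have hmM : m + 1 ≤ M := by omega
        have hgT2 : ¬ (p:ℤ)^(v - (2*M)*a) ∣ lucasU P' Q' (2*M+1) := by
          intro h
          apply hgT
          rw [hM]
          have := (ht (2*M)).mpr (by simpa using h)
          simpa using this
        have hlb : v ≥ 2*M*a + M + 1 := by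
          by_contra hlt2
          push_neg at hlt2
          exact hgT2 ((pow_dvd_pow (p:ℤ) (by omega : v - 2*M*a ≤ M)).trans (hCC M).1)
        have hx : 2*m*a ≤ 2*(M-1)*a := Nat.mul_le_mul_right a (by omega)
        have hy : 2*(M-1)*a ≤ 2*M*a := Nat.mul_le_mul_right a (by omega)
        omega
    · -- Case B : no small elements at all
      refine ⟨2, le_refl 2, ?_⟩
      intro n hnT hn0 hnlt
      exfalso
      obtain ⟨n1, hn1⟩ : ∃ n1, n = n1 + 1 := ⟨n - 1, by omega⟩
      have hnT' : (p:ℤ)^(v - n1*a) ∣ lucasU P' Q' (n1+1) := (ht n1).mp (by rw [← hn1]; exact hnT)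
      have hv0 : v - n1*a = 0 := by
        by_contra hne
        have h1 : (p:ℤ) ∣ lucasU P' Q' (n1+1) :=
          (dvd_pow_self (p:ℤ) hne).trans hnT'
        exact caseB hp hden hq' n1 h1
      have hv0' : v - g1*a = 0 := by
        have : n1*a ≤ g1*a := Nat.mul_le_mul_right a (by omega)
        omega
      exact hgT' (by rw [hv0']; simpa using one_dvd _)
  · -- Case A : rank of apparition argument
    set c := v - g1*a with hc
    have hc1 : c ≠ 0 := by
      intro h0
      exact hgT' (by rw [h0]; simpa using one_dvd _)
    by_cases hD : ∃ n, 0 < n ∧ (p:ℤ)^c ∣ lucasU P' Q' n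
    · set r := Nat.find hD with hr
      obtain ⟨hr0, hrd⟩ := Nat.find_spec hD
      have hr2 : 2 ≤ r := by
        rcases Nat.lt_or_ge r 2 with h | h
        · exfalso
          have hreq : r = 1 := by omega
          have : (p:ℤ)^c ∣ lucasU P' Q' 1 := by rw [← hreq]; exact hrd
          have h1 : (p:ℤ)^c ∣ 1 := by simpa [lucasU] using this
          rw [← Nat.cast_pow, natCast_dvd'] at h1
          have := Nat.le_of_dvd (by norm_num) h1
          have h2 : p ≤ p ^ c := Nat.le_self_pow hc1 p
          have := hp.two_le
          omega
        · exact h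
      refine ⟨r, hr2, ?_⟩
      intro n hnT hn0 hnlt
      obtain ⟨n1, hn1⟩ : ∃ n1, n = n1 + 1 := ⟨n - 1, by omega⟩
      have hnT' : (p:ℤ)^(v - n1*a) ∣ lucasU P' Q' (n1+1) := (ht n1).mp (by rw [← hn1]; exact hnT)
      have hmono : c ≤ v - n1*a := by
        have : n1*a ≤ g1*a := Nat.mul_le_mul_right a (by omega)
        omega
      have hnD : (p:ℤ)^c ∣ lucasU P' Q' n := by
        rw [hn1]
        exact (pow_dvd_pow (p:ℤ) hmono).trans hnT'
      exact min_dvd hp hq' P' c hD n hnD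
    · refine ⟨2, le_refl 2, ?_⟩
      intro n hnT hn0 hnlt
      exfalso
      obtain ⟨n1, hn1⟩ : ∃ n1, n = n1 + 1 := ⟨n - 1, by omega⟩
      have hnT' : (p:ℤ)^(v - n1*a) ∣ lucasU P' Q' (n1+1) := (ht n1).mp (by rw [← hn1]; exact hnT)
      have hmono : c ≤ v - n1*a := by
        have : n1*a ≤ g1*a := Nat.mul_le_mul_right a (by omega)
        omega
      exact hD ⟨n, hn0, by rw [hn1]; exact (pow_dvd_pow (p:ℤ) hmono).trans hnT'⟩

end LucasAux
namespace LucasAux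

theorem int_mul_mem (u : ℤ) (x : ℚ) : (∃ k : ℤ, (u:ℚ) * x = (k:ℚ)) ↔ ((x.den:ℤ)) ∣ u := by
  constructor
  · rintro ⟨k, hk⟩
    have hd : ((x.den:ℚ)) ≠ 0 := by exact_mod_cast x.den_nz
    have h1 : (u:ℚ) * (x * x.den) = k * x.den := by rw [← mul_assoc, hk]
    rw [Rat.mul_den_eq_num] at h1
    have h2 : ((u * x.num : ℤ) : ℚ) = ((k * x.den : ℤ) : ℚ) := by push_cast; exact h1
    have h3 : u * x.num = k * x.den := by exact_mod_cast h2
    have h4 : (x.den:ℤ) ∣ u * x.num := ⟨k, by linarith [h3]⟩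
    rw [natCast_dvd', Int.natAbs_mul] at h4
    have h5 : x.den ∣ u.natAbs := (Nat.Coprime.dvd_of_dvd_mul_right
      (Nat.Coprime.symm x.reduced) h4)
    rwa [← natCast_dvd'] at h5
  · rintro ⟨t, ht⟩
    refine ⟨t * x.num, ?_⟩
    have hd : ((x.den:ℚ)) ≠ 0 := by exact_mod_cast x.den_nz
    have hx : (x.num:ℚ) = x * x.den := (Rat.mul_den_eq_num x).symm
    rw [ht]
    push_cast
    rw [hx]
    ring

theorem part1 (P Q : ℤ) (R : ℚ) (hfin : (lucasSG P Q R)ᶜ.Finite) :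
    smallElems (lucasSG P Q R) = ∅ ∨
      ∃ d : ℕ, 2 ≤ d ∧ ∀ n ∈ smallElems (lucasSG P Q R), d ∣ n := by
  have hset : lucasSG P Q R = {n : ℕ | ((R.den:ℤ)) ∣ lucasU P Q n} := by
    ext n
    exact int_mul_mem (lucasU P Q n) R
  rw [hset] at hfin ⊢
  set S : Set ℕ := {n : ℕ | ((R.den:ℤ)) ∣ lucasU P Q n} with hS
  by_cases hc : Sᶜ = ∅
  · left
    have : frobNum S = 0 := by
      rw [frobNum, hc, csSup_empty]; rfl
    ext n
    simp only [smallElems, Set.mem_setOf_eq, this, Set.mem_empty_iff_false, iff_false]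
    omega
  · right
    have hg : sSup Sᶜ ∈ Sᶜ := Set.Nonempty.csSup_mem (Set.nonempty_iff_ne_empty.mpr hc) hfin
    set g := sSup Sᶜ with hgdef
    have hgS : ¬ ((R.den:ℤ)) ∣ lucasU P Q g := hg
    -- find a prime power of the denominator not dividing U g
    have hu0 : (lucasU P Q g).natAbs ≠ 0 := by
      intro h
      rw [Int.natAbs_eq_zero] at h
      exact hgS (by rw [h]; exact dvd_zero _)
    have hbu : ¬ R.den ∣ (lucasU P Q g).natAbs := by
      rwa [← natCast_dvd']
    have hB0 : R.den ≠ 0 := R.den_nz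
    obtain ⟨p, hplt⟩ : ∃ p, (lucasU P Q g).natAbs.factorization p < R.den.factorization p := by
      by_contra hall
      push_neg at hall
      exact hbu ((Nat.factorization_le_iff_dvd hB0 hu0).mp (fun p => hall p))
    have hps : p ∈ R.den.primeFactors := by
      rw [← Nat.support_factorization, Finsupp.mem_support_iff]
      omega
    have hp : p.Prime := Nat.prime_of_mem_primeFactors hps
    set v := R.den.factorization p with hv
    have hpvB : p ^ v ∣ R.den := Nat.ordProj_dvd R.den p
    have hpvU : ¬ (p:ℤ)^v ∣ lucasU P Q g := by
      rw [← Nat.cast_pow, natCast_dvd']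
      intro h
      rw [Nat.Prime.pow_dvd_iff_le_factorization hp hu0] at h
      omega
    set T : Set ℕ := {n : ℕ | (p:ℤ)^v ∣ lucasU P Q n} with hTT
    have hST : S ⊆ T := by
      intro n hn
      have h1 : ((p ^ v : ℕ):ℤ) ∣ (R.den : ℤ) := by
        exact_mod_cast Int.natCast_dvd_natCast.mpr hpvB
      have := h1.trans hn
      rwa [Nat.cast_pow] at this
    have hTfin : Tᶜ.Finite := hfin.subset (Set.compl_subset_compl.mpr hST)
    obtain ⟨d, hd2, hdvd⟩ := perPrime P Q hp v hTfin
    refine ⟨d, hd2, ?_⟩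
    rintro n ⟨hnS, hn0, hnlt⟩
    have hgT : g ∈ Tᶜ := fun h => hpvU h
    have hgle : g ≤ sSup Tᶜ := le_csSup hTfin.bddAbove hgT
    have hfr : frobNum S = g := rfl
    rw [hfr] at hnlt
    exact hdvd n (hST hnS) hn0 (lt_of_lt_of_le hnlt hgle)

end LucasAux
namespace LucasAux

theorem auxM_not_dvd {p : ℕ} (hp : p.Prime) {c dq : ℤ} (hc : ¬ (p:ℤ) ∣ c) (hdq : (p:ℤ) ∣ dq) :
    ∀ n, ¬ (p:ℤ) ∣ auxM c dq (n+1) := by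
  have hpp : Prime (p:ℤ) := Nat.prime_iff_prime_int.mp hp
  intro n
  induction n using Nat.strong_induction_on with
  | _ n ih =>
    match n with
    | 0 => exact hc
    | (k+1) =>
      intro hd
      have hrec : auxM c dq (k+2) = c * auxM c dq (k+1) - dq * auxM c dq k := rfl
      rw [hrec] at hd
      have h1 : (p:ℤ) ∣ dq * auxM c dq k := hdq.mul_right _
      have h2 : (p:ℤ) ∣ c * auxM c dq (k+1) := by
        have := dvd_add hd h1
        simpa using this
      rcases hpp.dvd_mul.mp h2 with h | h
      · exact hc h
      · exact ih k (by omega) h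

theorem ch2 (A : Matrix (Fin 2) (Fin 2) ℚ) : A^2 = A.trace • A - A.det • 1 := by
  ext i j
  fin_cases i <;> fin_cases j <;>
    simp [pow_two, Matrix.mul_apply, Fin.sum_univ_two, Matrix.trace_fin_two,
      Matrix.det_fin_two, Matrix.one_apply] <;> ring

theorem trace_rec (A : Matrix (Fin 2) (Fin 2) ℚ) (n : ℕ) :
    (A^(n+2)).trace = A.trace * (A^(n+1)).trace - A.det * (A^n).trace := by
  have h1 : A^(n+2) = A^n * A^2 := pow_add A n 2
  rw [h1, ch2]
  rw [Matrix.mul_sub, Matrix.trace_sub, Matrix.mul_smul, Matrix.trace_smul,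
    Matrix.mul_smul, Matrix.trace_smul]
  have h2 : A^n * A = A^(n+1) := (pow_succ A n).symm
  rw [h2, Matrix.mul_one]
  simp [smul_eq_mul]

theorem auxM_eq (A : Matrix (Fin 2) (Fin 2) ℚ) (qz : ℤ) (hq : A.det = (qz:ℚ)) :
    ∀ n, ((auxM A.trace.num (qz * (A.trace.den:ℤ)^2) n : ℤ) : ℚ)
      = (A^n).trace * (A.trace.den:ℚ)^n := by
  intro n
  induction n using Nat.strong_induction_on with
  | _ n ih =>
    match n with
    | 0 => simp [auxM, Matrix.trace_one]
    | 1 =>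
      show ((A.trace.num : ℤ):ℚ) = (A^1).trace * (A.trace.den:ℚ)^1
      rw [pow_one, pow_one]
      rw [← Rat.mul_den_eq_num]
    | (k+2) =>
      have i1 := ih (k+1) (by omega)
      have i0 := ih k (by omega)
      have hrec : auxM A.trace.num (qz * (A.trace.den:ℤ)^2) (k+2)
          = A.trace.num * auxM A.trace.num (qz * (A.trace.den:ℤ)^2) (k+1)
            - (qz * (A.trace.den:ℤ)^2) * auxM A.trace.num (qz * (A.trace.den:ℤ)^2) k := rfl
      rw [hrec]
      push_cast
      rw [i1, i0, trace_rec, hq]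
      have hnum : ((A.trace.num : ℤ):ℚ) = A.trace * (A.trace.den:ℚ) := by
        rw [← Rat.mul_den_eq_num]
      push_cast at hnum
      rw [hnum]
      ring

theorem den_one_int (x : ℚ) (h : x.den = 1) : ∃ z : ℤ, x = (z:ℚ) :=
  ⟨x.num, by rw [← Rat.num_div_den x, h]; simp⟩

theorem pow_formula (A : Matrix (Fin 2) (Fin 2) ℚ) (c qz : ℤ)
    (ht : A.trace = (c:ℚ)) (hq : A.det = (qz:ℚ)) :
    ∀ n, A^(n+1) = ((lucasU c qz (n+1) : ℤ):ℚ) • A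
      - ((qz * lucasU c qz n : ℤ):ℚ) • (1 : Matrix (Fin 2) (Fin 2) ℚ) := by
  have hch : A^2 = (c:ℚ) • A - (qz:ℚ) • 1 := by
    rw [ch2, ht, hq]
  intro n
  induction n with
  | zero => simp [lucasU]
  | succ n ih =>
    have h1 : A^(n+2) = A^(n+1) * A := (pow_succ A (n+1))
    rw [h1, ih]
    rw [Matrix.sub_mul, Matrix.smul_mul, Matrix.smul_mul, Matrix.one_mul]
    have h2 : A * A = A ^ 2 := (pow_two A).symm
    have hU2 : lucasU c qz (n+2) = c * lucasU c qz (n+1) - qz * lucasU c qz n := rfl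
    rw [h2, hch, hU2]
    push_cast
    module

theorem part2 (T : Set ℕ) (hTfin : Tᶜ.Finite) (hsm : smallElems T ≠ ∅)
    (hngcd : ¬ ∃ d : ℕ, 2 ≤ d ∧ ∀ n ∈ smallElems T, d ∣ n) :
    ¬ ∃ A : Matrix (Fin 2) (Fin 2) ℚ, expSG A = T := by
  rintro ⟨A, hA⟩
  subst hA
  set M := sSup (expSG A)ᶜ with hM
  have htail : ∀ n, M < n → n ∈ expSG A := by
    intro n hn
    by_contra h
    have := le_csSup hTfin.bddAbove (h : n ∈ (expSG A)ᶜ)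
    omega
  have hn1 : M + 1 ∈ expSG A := htail _ (by omega)
  obtain ⟨k00, h00⟩ := hn1 0 0
  obtain ⟨k01, h01⟩ := hn1 0 1
  obtain ⟨k10, h10⟩ := hn1 1 0
  obtain ⟨k11, h11⟩ := hn1 1 1
  -- det is an integer
  have hdetden : A.det.den = 1 := by
    have hdet : A.det ^ (M+1) = ((k00 * k11 - k01 * k10 : ℤ):ℚ) := by
      rw [← Matrix.det_pow, Matrix.det_fin_two, h00, h01, h10, h11]
      push_cast; ring
    have h1 : (A.det ^ (M+1)).den = 1 := by rw [hdet]; exact Rat.den_intCast _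
    rw [Rat.den_pow] at h1
    exact (pow_eq_one_iff.mp h1).resolve_right (Nat.succ_ne_zero M)
  obtain ⟨qz, hq⟩ := den_one_int A.det hdetden
  -- trace is an integer
  have htrden : A.trace.den = 1 := by
    by_contra hne1
    obtain ⟨p, hp, hpdvd⟩ := Nat.exists_prime_and_dvd hne1
    have htr : (A^(M+1)).trace = ((k00 + k11 : ℤ):ℚ) := by
      rw [Matrix.trace_fin_two, h00, h11]; push_cast; ring
    have hMq := auxM_eq A qz hq (M+1)
    rw [htr] at hMq
    have hint : auxM A.trace.num (qz * (A.trace.den:ℤ)^2) (M+1)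
        = (k00 + k11) * (A.trace.den:ℤ)^(M+1) := by
      exact_mod_cast hMq
    have hpd : (p:ℤ) ∣ (A.trace.den:ℤ) := Int.natCast_dvd_natCast.mpr hpdvd
    have hpc : ¬ (p:ℤ) ∣ A.trace.num := by
      intro h
      have h1 : p ∣ A.trace.num.natAbs := (natCast_dvd' _ _).mp h
      have h2 := Nat.dvd_gcd h1 hpdvd
      rw [A.trace.reduced] at h2
      exact hp.one_lt.ne' (Nat.dvd_one.mp h2)
    have hdq : (p:ℤ) ∣ qz * (A.trace.den:ℤ)^2 :=
      ((dvd_pow hpd two_ne_zero).mul_left qz)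
    apply auxM_not_dvd hp hpc hdq M
    rw [hint]
    exact (dvd_pow hpd (Nat.succ_ne_zero M)).mul_left _
  obtain ⟨c, htr⟩ := den_one_int A.trace htrden
  -- the lcm of the denominators
  set L : ℕ := Nat.lcm (Nat.lcm (A 0 0).den (A 0 1).den) (Nat.lcm (A 1 0).den (A 1 1).den)
    with hLdef
  have hL0 : L ≠ 0 :=
    Nat.lcm_ne_zero (Nat.lcm_ne_zero (A 0 0).den_nz (A 0 1).den_nz)
      (Nat.lcm_ne_zero (A 1 0).den_nz (A 1 1).den_nz)
  have hLQ : ((L:ℚ)) ≠ 0 := by exact_mod_cast hL0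
  have hmem : ∀ u : ℤ, (∃ k : ℤ, (u:ℚ) * ((L:ℚ))⁻¹ = (k:ℚ)) ↔ ((L:ℤ) ∣ u) := by
    intro u
    constructor
    · rintro ⟨k, hk⟩
      refine ⟨k, ?_⟩
      have h3 : (u:ℚ) = (L:ℚ) * k := by
        field_simp at hk
        linarith [hk]
      exact_mod_cast h3
    · rintro ⟨t, ht2⟩
      refine ⟨t, ?_⟩
      rw [ht2]
      push_cast
      field_simp
  have hLdvd : ∀ u : ℤ, ((L:ℤ) ∣ u) ↔ (∀ i j : Fin 2, ((A i j).den:ℤ) ∣ u) := by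
    intro u
    rw [natCast_dvd']
    rw [hLdef, Nat.lcm_dvd_iff, Nat.lcm_dvd_iff, Nat.lcm_dvd_iff]
    simp only [← natCast_dvd']
    constructor
    · rintro ⟨⟨a, b⟩, ⟨c', d'⟩⟩ i j
      fin_cases i <;> fin_cases j <;> assumption
    · intro h
      exact ⟨⟨h 0 0, h 0 1⟩, ⟨h 1 0, h 1 1⟩⟩
  have hshift : ∀ (x : ℚ) (m : ℤ), (∃ k : ℤ, x - (m:ℚ) = (k:ℚ)) ↔ (∃ k : ℤ, x = (k:ℚ)) := by
    intro x m
    constructor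
    · rintro ⟨k, hk⟩; exact ⟨k + m, by push_cast; linarith⟩
    · rintro ⟨k, hk⟩; exact ⟨k - m, by push_cast; linarith⟩
  have hsetEq : expSG A = lucasSG c qz ((L:ℚ))⁻¹ := by
    ext n
    match n with
    | 0 =>
      apply iff_of_true
      · intro i j
        refine ⟨if i = j then 1 else 0, ?_⟩
        rw [pow_zero, Matrix.one_apply]
        split <;> simp
      · exact ⟨0, by simp [lucasU]⟩
    | (n+1) =>
      have happ : ∀ i j, (A^(n+1)) i j
          = ((lucasU c qz (n+1):ℤ):ℚ) * A i j
            - ((qz * lucasU c qz n * (if i = j then 1 else 0) : ℤ):ℚ) := by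
        intro i j
        rw [pow_formula A c qz htr hq n]
        simp only [Matrix.sub_apply, Matrix.smul_apply, smul_eq_mul, Matrix.one_apply]
        split <;> push_cast <;> ring
      have hiff : (n+1) ∈ expSG A ↔ ∀ i j : Fin 2, ((A i j).den:ℤ) ∣ lucasU c qz (n+1) := by
        constructor
        · intro h i j
          have h1 := h i j
          rw [happ i j] at h1
          rw [hshift] at h1
          exact (int_mul_mem _ _).mp h1
        · intro h i j
          rw [happ i j, hshift]
          exact (int_mul_mem _ _).mpr (h i j)
      rw [hiff]
      show _ ↔ ∃ k : ℤ, ((lucasU c qz (n+1):ℤ):ℚ) * ((L:ℚ))⁻¹ = (k:ℚ)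
      rw [hmem, hLdvd]
  rw [hsetEq] at hTfin hsm hngcd
  rcases part1 c qz _ hTfin with h | h
  · exact hsm h
  · exact hngcd h

end LucasAux

/-- If a Lucas semigroup `S = L(P,Q,R)` is numerical (has finite complement),
then `s(S) = ∅` or some `d ≥ 2` divides every nonzero small element of `S`.
Consequently, a numerical semigroup `T` with `s(T) ≠ ∅` and `gcd s(T) = 1`
(no `d ≥ 2` divides all of `s(T)`) is not the exponent semigroup of any `2×2`
rational matrix. -/
theorem lucasSG_small_gcd (P Q : ℤ) (R : ℚ)
    (hfin : (lucasSG P Q R)ᶜ.Finite) :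
    (smallElems (lucasSG P Q R) = ∅ ∨
      ∃ d : ℕ, 2 ≤ d ∧ ∀ n ∈ smallElems (lucasSG P Q R), d ∣ n) ∧
    ∀ T : Set ℕ, 0 ∈ T → (∀ m n : ℕ, m ∈ T → n ∈ T → m + n ∈ T) →
      Tᶜ.Finite → smallElems T ≠ ∅ →
      (¬ ∃ d : ℕ, 2 ≤ d ∧ ∀ n ∈ smallElems T, d ∣ n) →
      ¬ ∃ A : Matrix (Fin 2) (Fin 2) ℚ, expSG A = T := by
  exact ⟨LucasAux.part1 P Q R hfin,
    fun T _ _ hTfin hsm hngcd => LucasAux.part2 T hTfin hsm hngcd⟩
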